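/- If a total preorder ≼ on a real vector space satisfies the scaling and addition axioms, then every indifference class [x] = {y : y ∼ x} is an affine subset: if y, z ∈ [x] then (1−λ)•y + λ•z ∈ [x] for every real λ. -/
import Mathlib


theorem stmt_2 {Y : Type*} [AddCommGroup Y] [Module ℝ Y]
    (r : Y → Y → Prop)
    (htotal : ∀ x y, r x y ∨ r y x)
    (htrans : ∀ x y z, r x y → r y z → r x z)
    (hscale : ∀ (l : ℝ), 0 < l → ∀ x y, r x y ↔ r (l • x) (l • y))
    (hadd : ∀ (z : Y), ∀ x y, r x y ↔ r (x + z) (y + z)) :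
    ∀ x y z : Y, (r x y ∧ r y x) → (r x z ∧ r z x) →
      ∀ l : ℝ, r x ((1 - l) • y + l • z) ∧ r ((1 - l) • y + l • z) x := by
  have hrefl : ∀ x, r x x := fun x => (htotal x x).elim id id
  intro x y z hxy hxz l
  -- w := z - y is indifferent to 0
  set w : Y := z - y with hw
  have hyz : r y z ∧ r z y :=
    ⟨htrans _ _ _ hxy.2 hxz.1, htrans _ _ _ hxz.2 hxy.1⟩
  have hw0 : r w 0 ∧ r 0 w := by
    constructor
    · simpa [hw, sub_add_cancel, sub_eq_add_neg] using (hadd (-y) _ _).mp hyz.2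
    · simpa [hw, sub_add_cancel, sub_eq_add_neg] using (hadd (-y) _ _).mp hyz.1
  -- negation preserves indifference to 0
  have hneg : ∀ v : Y, r v 0 ∧ r 0 v → r (-v) 0 ∧ r 0 (-v) := by
    intro v hv
    constructor
    · simpa using (hadd (-v) _ _).mp hv.2
    · simpa using (hadd (-v) _ _).mp hv.1
  -- scaling by any real preserves indifference to 0
  have hsm : ∀ (c : ℝ), r (c • w) 0 ∧ r 0 (c • w) := by
    intro c
    rcases lt_trichotomy c 0 with hc | hc | hc
    · have h1 := hneg w hw0
      have h2 : r ((-c) • (-w)) ((-c) • (0:Y)) ∧ r ((-c) • (0:Y)) ((-c) • (-w)) :=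
        ⟨(hscale (-c) (by linarith) _ _).mp h1.1, (hscale (-c) (by linarith) _ _).mp h1.2⟩
      simpa [smul_zero, neg_smul, smul_neg] using h2
    · simp [hc, hrefl]
    · have h2 : r (c • w) (c • (0:Y)) ∧ r (c • (0:Y)) (c • w) :=
        ⟨(hscale c hc _ _).mp hw0.1, (hscale c hc _ _).mp hw0.2⟩
      simpa [smul_zero] using h2
  -- translate back: y + l•w ~ y
  have hly : r (y + l • w) y ∧ r y (y + l • w) := by
    have := hsm l
    constructor
    · simpa [add_comm] using (hadd y _ _).mp this.1
    · simpa [add_comm] using (hadd y _ _).mp this.2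
  have key : (1 - l) • y + l • z = y + l • w := by
    simp [hw, smul_sub, sub_smul]
    abel
  rw [key]
  exact ⟨htrans _ _ _ hxy.1 hly.2, htrans _ _ _ hly.1 hxy.2⟩
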